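/- There is a universal constant C such that for every n, every w ∈ ℝ^n, every s ∈ ℝ, and every ε ∈ (0,1), the generalized weighted majority event M_{w,s} = {x ∈ Ω_n : Σ_{j=1}^n (2x_j − 1) w_j > s} satisfies P[M_{w,s} \ N_ε M_{w,s}] ≤ C ε^{1/4}. In particular, the family of all such events is uniformly stable. -/

import Mathlib

namespace BKS

open Finset Filter

variable {ι : Type} [Fintype ι] [DecidableEq ι]

/-- Probability of an event under the uniform measure on `ι → Bool`. -/
noncomputable def cprob (A : Finset (ι → Bool)) : ℝ :=
  (A.card : ℝ) / 2 ^ Fintype.card ι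

/-- Expectation of a function under the uniform measure on `ι → Bool`. -/
noncomputable def cexpect (f : (ι → Bool) → ℝ) : ℝ :=
  (∑ x : ι → Bool, f x) / 2 ^ Fintype.card ι

/-- Real-valued indicator of an event. -/
noncomputable def indE (A : Finset (ι → Bool)) : (ι → Bool) → ℝ :=
  fun x => if x ∈ A then 1 else 0

/-- Transition kernel of the ε-noise: probability that `N_ε(x) = y`. -/
noncomputable def noiseKernel (ε : ℝ) (x y : ι → Bool) : ℝ :=
  ∏ j : ι, if y j = x j then 1 - ε else ε

/-- `P(N_ε(x) ∈ A | x)`. -/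
noncomputable def condProb (ε : ℝ) (A : Finset (ι → Bool)) (x : ι → Bool) : ℝ :=
  ∑ y ∈ A, noiseKernel ε x y

/-- Sensitivity gauge φ(A, ε) = inf{δ > 0 : P{x : |P(N_ε(x) ∈ A | x) − P(A)| > δ} < δ}. -/
noncomputable def gauge (ε : ℝ) (A : Finset (ι → Bool)) : ℝ :=
  sInf {δ : ℝ | 0 < δ ∧
    cprob (@Finset.filter _ (fun x => δ < |condProb ε A x - cprob A|)
      (Classical.decPred _) Finset.univ) < δ}

/-- Flip the `k`-th bit. -/
def flipBit (k : ι) (x : ι → Bool) : ι → Bool := Function.update x k (!x k)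

/-- Influence of the `k`-th variable: `I_k(f) = E|f(σ_k x) − f(x)|`. -/
noncomputable def influence (k : ι) (f : (ι → Bool) → ℝ) : ℝ :=
  cexpect fun x => |f (flipBit k x) - f x|

/-- `I(f) = Σ_k I_k(f)`. -/
noncomputable def totalInf (f : (ι → Bool) → ℝ) : ℝ := ∑ k : ι, influence k f

/-- `II(f) = Σ_k I_k(f)²`. -/
noncomputable def sqInf (f : (ι → Bool) → ℝ) : ℝ := ∑ k : ι, (influence k f) ^ 2

/-- `II(A)` for an event `A`. -/
noncomputable def sqInfE (A : Finset (ι → Bool)) : ℝ := sqInf (indE A)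

/-- A monotone (upward closed) event. -/
def MonotoneEvent (A : Finset (ι → Bool)) : Prop :=
  ∀ x y : ι → Bool, (∀ j, x j ≤ y j) → x ∈ A → y ∈ A

/-- Fourier–Walsh coefficient `f̂(S) = E[f · u_S]`, where `u_S(x) = (−1)^{|S ∩ x|}`. -/
noncomputable def walshFourier (f : (ι → Bool) → ℝ) (S : Finset ι) : ℝ :=
  cexpect fun x => f x * (-1 : ℝ) ^ (S.filter fun j => x j = true).card

/-- `Q_ε f (x) = E[f(N_ε(x))]`. -/
noncomputable def Qop (ε : ℝ) (f : (ι → Bool) → ℝ) (x : ι → Bool) : ℝ :=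
  ∑ y : ι → Bool, noiseKernel ε x y * f y

/-- `VAR(f, ε)`: variance of `x ↦ E[f(N_ε(x)) | x]`. -/
noncomputable def VAR (ε : ℝ) (f : (ι → Bool) → ℝ) : ℝ :=
  cexpect fun x => (Qop ε f x - cexpect (Qop ε f)) ^ 2

/-- `P[A △ N_ε A]`. -/
noncomputable def probSymmDiff (ε : ℝ) (A : Finset (ι → Bool)) : ℝ :=
  cexpect fun x => ∑ y : ι → Bool, noiseKernel ε x y *
    (if (x ∈ A) ↔ (y ∈ A) then 0 else 1)

/-- `P[A \ N_ε A]`. -/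
noncomputable def probOffDiff (ε : ℝ) (A : Finset (ι → Bool)) : ℝ :=
  cexpect fun x => ∑ y : ι → Bool, noiseKernel ε x y *
    (if x ∈ A ∧ y ∉ A then 1 else 0)

/-- Majority function on the set `K`: `M_K(x) = sign(Σ_{j∈K}(2x_j − 1))`. -/
noncomputable def majority (K : Finset ι) (x : ι → Bool) : ℝ :=
  Real.sign (∑ j ∈ K, (2 * (if x j then (1:ℝ) else 0) - 1))

/-- Weighted majority function `M_w(x) = sign(Σ_j (2x_j − 1) w_j)`. -/
noncomputable def wMajority (w : ι → ℝ) (x : ι → Bool) : ℝ :=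
  Real.sign (∑ j : ι, (2 * (if x j then (1:ℝ) else 0) - 1) * w j)

/-- The discrete cube Ω_n = {0,1}^n. -/
abbrev Cube (n : ℕ) := Fin n → Bool

/-- The generalized weighted majority event M_{w,s} = {x : Σ_j (2x_j − 1) w_j > s}. -/
noncomputable def wmajEvent (n : ℕ) (w : Fin n → ℝ) (s : ℝ) : Finset (Cube n) :=
  @Finset.filter _ (fun x => s < ∑ j, (2 * (if x j then (1:ℝ) else 0) - 1) * w j)
    (Classical.decPred _) Finset.univ

/-! ### Auxiliary machinery for the proof of `wmaj_stable` -/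

/-- Flip `x` at the positions where `F` is `true`. -/
def flipF (F x : ι → Bool) : ι → Bool := fun j => Bool.xor (F j) (x j)

/-- The ±1 value of a bit. -/
noncomputable def sg (x : ι → Bool) (j : ι) : ℝ := 2 * (if x j then (1:ℝ) else 0) - 1

/-- Weighted sum of signs. -/
noncomputable def Wsum (w : ι → ℝ) (x : ι → Bool) : ℝ := ∑ j, sg x j * w j

/-- Probability of the flip pattern `F` under independent `Bernoulli ε` flips. -/
noncomputable def pw (ε : ℝ) (F : ι → Bool) : ℝ := ∏ j, if F j then ε else 1 - ε

/-- Indicator that `x` is above the threshold but `y` is not. -/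
noncomputable def offInd (w : ι → ℝ) (s : ℝ) (x y : ι → Bool) : ℝ :=
  if s < Wsum w x ∧ ¬ s < Wsum w y then 1 else 0

lemma offInd_nonneg (w : ι → ℝ) (s : ℝ) (x y : ι → Bool) : 0 ≤ offInd w s x y := by
  unfold offInd; split_ifs <;> norm_num

lemma offInd_le_one (w : ι → ℝ) (s : ℝ) (x y : ι → Bool) : offInd w s x y ≤ 1 := by
  unfold offInd; split_ifs <;> norm_num

lemma flipF_flipF (F x : ι → Bool) : flipF F (flipF F x) = x := by
  funext j; unfold flipF; cases F j <;> cases x j <;> rfl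

lemma flipF_invol (F : ι → Bool) : Function.Involutive (flipF F) := fun x => flipF_flipF F x

lemma flipF_comm (p q x : ι → Bool) : flipF p (flipF q x) = flipF q (flipF p x) := by
  funext j; unfold flipF; cases p j <;> cases q j <;> cases x j <;> rfl

lemma flipF_arg_invol (x : ι → Bool) : Function.Involutive (fun F => flipF F x) := by
  intro F; funext j; show Bool.xor (Bool.xor (F j) (x j)) (x j) = F j
  cases F j <;> cases x j <;> rfl

lemma sum_flipF_arg (x : ι → Bool) (g : (ι → Bool) → ℝ) :
    ∑ y : ι → Bool, g y = ∑ F : ι → Bool, g (flipF F x) :=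
  (Fintype.sum_bijective (fun F => flipF F x) (flipF_arg_invol x).bijective _ _
    (fun _ => rfl)).symm

lemma sum_flipF_dom (G : ι → Bool) (h : (ι → Bool) → ℝ) :
    ∑ x : ι → Bool, h x = ∑ z : ι → Bool, h (flipF G z) :=
  (Fintype.sum_bijective (flipF G) (flipF_invol G).bijective _ _ (fun _ => rfl)).symm

lemma noiseKernel_flipF (ε : ℝ) (x F : ι → Bool) :
    noiseKernel ε x (flipF F x) = pw ε F := by
  unfold noiseKernel pw
  refine Finset.prod_congr rfl fun j _ => ?_
  unfold flipF; cases F j <;> cases x j <;> simp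

lemma noiseKernel_symm (ε : ℝ) (x y : ι → Bool) :
    noiseKernel ε x y = noiseKernel ε y x := by
  unfold noiseKernel
  refine Finset.prod_congr rfl fun j _ => ?_
  cases hx : x j <;> cases hy : y j <;> simp

lemma sum_pw (ε : ℝ) : ∑ F : ι → Bool, pw ε F = 1 := by
  unfold pw
  rw [← Fintype.piFinset_univ, ← Finset.prod_univ_sum (fun _ => (Finset.univ : Finset Bool))
    (fun _ k => if k then ε else 1 - ε)]
  simp

lemma pw_nonneg {ε : ℝ} (hε0 : 0 ≤ ε) (hε1 : ε ≤ 1) (F : ι → Bool) : 0 ≤ pw ε F := by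
  unfold pw
  refine Finset.prod_nonneg fun j _ => ?_
  split_ifs <;> linarith

/-- `probOffDiff` in terms of flip patterns. -/
lemma probOffDiff_eq_flip (ε : ℝ) (A : Finset (ι → Bool)) :
    probOffDiff ε A
      = (∑ x : ι → Bool, ∑ F : ι → Bool,
          pw ε F * (if x ∈ A ∧ flipF F x ∉ A then (1:ℝ) else 0)) / 2 ^ Fintype.card ι := by
  unfold probOffDiff cexpect
  congr 1
  refine Finset.sum_congr rfl fun x _ => ?_
  dsimp only
  rw [sum_flipF_arg x (fun y => noiseKernel ε x y * (if x ∈ A ∧ y ∉ A then (1:ℝ) else 0))]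
  exact Finset.sum_congr rfl fun F _ => by rw [noiseKernel_flipF]

lemma probSymmDiff_eq_flip (ε : ℝ) (A : Finset (ι → Bool)) :
    probSymmDiff ε A
      = (∑ x : ι → Bool, ∑ F : ι → Bool,
          pw ε F * (if (x ∈ A) ↔ (flipF F x ∈ A) then (0:ℝ) else 1)) / 2 ^ Fintype.card ι := by
  unfold probSymmDiff cexpect
  congr 1
  refine Finset.sum_congr rfl fun x _ => ?_
  dsimp only
  rw [sum_flipF_arg x (fun y => noiseKernel ε x y * (if (x ∈ A) ↔ (y ∈ A) then (0:ℝ) else 1))]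
  exact Finset.sum_congr rfl fun F _ => by rw [noiseKernel_flipF]

/-- The symmetric difference probability is twice the one-sided one. -/
lemma probSymmDiff_eq_two_off (ε : ℝ) (A : Finset (ι → Bool)) :
    probSymmDiff ε A = 2 * probOffDiff ε A := by
  rw [probSymmDiff_eq_flip, probOffDiff_eq_flip, mul_div_assoc']
  congr 1
  have h1 : ∀ x F : ι → Bool,
      (if (x ∈ A) ↔ (flipF F x ∈ A) then (0:ℝ) else 1)
        = (if x ∈ A ∧ flipF F x ∉ A then (1:ℝ) else 0)
          + (if flipF F x ∈ A ∧ x ∉ A then (1:ℝ) else 0) := by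
    intro x F
    by_cases hx : x ∈ A <;> by_cases hy : flipF F x ∈ A <;> simp [hx, hy]
  calc ∑ x : ι → Bool, ∑ F : ι → Bool,
        pw ε F * (if (x ∈ A) ↔ (flipF F x ∈ A) then (0:ℝ) else 1)
      = (∑ x : ι → Bool, ∑ F : ι → Bool,
          pw ε F * (if x ∈ A ∧ flipF F x ∉ A then (1:ℝ) else 0))
        + ∑ x : ι → Bool, ∑ F : ι → Bool,
          pw ε F * (if flipF F x ∈ A ∧ x ∉ A then (1:ℝ) else 0) := by
        rw [← Finset.sum_add_distrib]
        refine Finset.sum_congr rfl fun x _ => ?_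
        rw [← Finset.sum_add_distrib]
        refine Finset.sum_congr rfl fun F _ => ?_
        rw [h1, mul_add]
    _ = 2 * ∑ x : ι → Bool, ∑ F : ι → Bool,
          pw ε F * (if x ∈ A ∧ flipF F x ∉ A then (1:ℝ) else 0) := by
        rw [two_mul]
        congr 1
        rw [Finset.sum_comm]
        rw [show (∑ F : ι → Bool, ∑ x : ι → Bool,
            pw ε F * (if flipF F x ∈ A ∧ x ∉ A then (1:ℝ) else 0))
          = ∑ F : ι → Bool, ∑ z : ι → Bool,
            pw ε F * (if z ∈ A ∧ flipF F z ∉ A then (1:ℝ) else 0) from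
          Finset.sum_congr rfl fun F _ => by
            rw [sum_flipF_dom F (fun x => pw ε F * (if flipF F x ∈ A ∧ x ∉ A then (1:ℝ) else 0))]
            exact Finset.sum_congr rfl fun z _ => by rw [flipF_flipF]]
        rw [Finset.sum_comm]

/-! #### The pivotality bound for monotone threshold functions -/

/-- The ±1 sign of a Boolean. -/
noncomputable def epsR {m : ℕ} (b : Fin m → Bool) (i : Fin m) : ℝ := if b i then -1 else 1

/-- Indicator that `ρ` lies in the pivotal window of half-width `|v|` around `s`. -/
noncomputable def pivInd (s v ρ : ℝ) : ℝ := if s - |v| < ρ ∧ ρ ≤ s + |v| then 1 else 0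

lemma pivInd_nonneg (s v ρ : ℝ) : 0 ≤ pivInd s v ρ := by
  unfold pivInd; split_ifs <;> norm_num

lemma pivInd_abs (s v ρ : ℝ) : pivInd s v ρ = pivInd s |v| ρ := by
  unfold pivInd; rw [abs_abs]

lemma epsR_sq {m : ℕ} (b : Fin m → Bool) (i : Fin m) : epsR b i * epsR b i = 1 := by
  unfold epsR; split_ifs <;> norm_num

lemma epsR_cases {m : ℕ} (b : Fin m → Bool) (i : Fin m) : epsR b i = 1 ∨ epsR b i = -1 := by
  unfold epsR; split_ifs <;> simp

/-- Splitting a sum over the Boolean cube along coordinate `i`. -/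
lemma sum_split_i {m : ℕ} (i : Fin m) (h : (Fin m → Bool) → ℝ) :
    ∑ b : Fin m → Bool, h b
      = ∑ b ∈ Finset.univ.filter (fun b : Fin m → Bool => b i = false),
          (h b + h (Function.update b i true)) := by
  rw [Finset.sum_add_distrib]
  rw [← Finset.sum_filter_add_sum_filter_not Finset.univ
      (fun b : Fin m → Bool => b i = false) h]
  congr 1
  refine Finset.sum_nbij' (fun b => Function.update b i false)
    (fun b => Function.update b i true) ?_ ?_ ?_ ?_ ?_
  · intro a ha
    simp only [Finset.mem_filter, Finset.mem_univ, true_and] at ha ⊢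
    simp
  · intro a ha
    simp only [Finset.mem_filter, Finset.mem_univ, true_and] at ha ⊢
    simp
  · intro a ha
    simp only [Finset.mem_filter, Finset.mem_univ, true_and] at ha
    have ha' : a i = true := by
      cases h' : a i
      · exact absurd h' ha
      · rfl
    rw [Function.update_idem, ← ha', Function.update_eq_self]
  · intro a ha
    simp only [Finset.mem_filter, Finset.mem_univ, true_and] at ha
    rw [Function.update_idem, ← ha, Function.update_eq_self]
  · intro a ha
    simp only [Finset.mem_filter, Finset.mem_univ, true_and] at ha
    have ha' : a i = true := by
      cases h' : a i
      · exact absurd h' ha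
      · rfl
    rw [Function.update_idem, ← ha', Function.update_eq_self]

lemma card_cube (m : ℕ) : (Fintype.card (Fin m → Bool)) = 2 ^ m := by
  rw [Fintype.card_fun, Fintype.card_bool, Fintype.card_fin]

lemma sum_one_cube (m : ℕ) : ∑ _b : Fin m → Bool, (1:ℝ) = 2 ^ m := by
  rw [Finset.sum_const, Finset.card_univ, card_cube, nsmul_eq_mul]
  push_cast
  ring

lemma sum_epsR_mul {m : ℕ} (i i' : Fin m) (hne : i ≠ i') :
    ∑ b : Fin m → Bool, epsR b i * epsR b i' = 0 := by
  rw [sum_split_i i (fun b => epsR b i * epsR b i')]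
  refine Finset.sum_eq_zero fun b hb => ?_
  simp only [Finset.mem_filter, Finset.mem_univ, true_and] at hb
  have h1 : epsR b i = 1 := by unfold epsR; rw [hb]; simp
  have h2 : epsR (Function.update b i true) i = -1 := by
    unfold epsR; rw [Function.update_self]; simp
  have h3 : epsR (Function.update b i true) i' = epsR b i' := by
    unfold epsR; rw [Function.update_of_ne (Ne.symm hne)]
  rw [h1, h2, h3]; ring

lemma sum_sq_L {m : ℕ} : ∑ b : Fin m → Bool, (∑ i, epsR b i) ^ 2 = m * 2 ^ m := by
  have expand : ∀ b : Fin m → Bool, (∑ i, epsR b i) ^ 2 = ∑ i, ∑ i', epsR b i * epsR b i' := by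
    intro b
    rw [sq, Finset.sum_mul_sum]
  calc ∑ b : Fin m → Bool, (∑ i, epsR b i) ^ 2
      = ∑ b : Fin m → Bool, ∑ i, ∑ i', epsR b i * epsR b i' :=
        Finset.sum_congr rfl fun b _ => expand b
    _ = ∑ i, ∑ i', ∑ b : Fin m → Bool, epsR b i * epsR b i' := by
        rw [Finset.sum_comm]
        exact Finset.sum_congr rfl fun i _ => Finset.sum_comm
    _ = ∑ i : Fin m, ∑ i' : Fin m, (if i = i' then (2:ℝ)^m else 0) := by
        refine Finset.sum_congr rfl fun i _ => Finset.sum_congr rfl fun i' _ => ?_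
        by_cases h : i = i'
        · subst h
          rw [if_pos rfl]
          calc ∑ b : Fin m → Bool, epsR b i * epsR b i
              = ∑ _b : Fin m → Bool, (1:ℝ) :=
                Finset.sum_congr rfl fun b _ => epsR_sq b i
            _ = 2 ^ m := sum_one_cube m
        · rw [if_neg h]
          exact sum_epsR_mul i i' h
    _ = ∑ _i : Fin m, (2:ℝ)^m := by
        refine Finset.sum_congr rfl fun i _ => ?_
        rw [Finset.sum_ite_eq Finset.univ i (fun _ => (2:ℝ)^m)]
        simp
    _ = m * 2 ^ m := by
        rw [Finset.sum_const, Finset.card_univ, Fintype.card_fin, nsmul_eq_mul]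

lemma sum_abs_L {m : ℕ} : ∑ b : Fin m → Bool, |∑ i, epsR b i| ≤ 2 ^ m * Real.sqrt m := by
  have hCS := Finset.sum_mul_sq_le_sq_mul_sq Finset.univ (fun _ : Fin m → Bool => (1:ℝ))
      (fun b => |∑ i, epsR b i|)
  simp only [one_mul, one_pow, sq_abs] at hCS
  rw [sum_one_cube m, sum_sq_L] at hCS
  have hnn : 0 ≤ ∑ b : Fin m → Bool, |∑ i, epsR b i| :=
    Finset.sum_nonneg fun b _ => abs_nonneg _
  have h2 : (2:ℝ) ^ m * ((m:ℝ) * 2 ^ m) = (2 ^ m * Real.sqrt m) ^ 2 := by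
    have h : (Real.sqrt m) ^ 2 = (m:ℝ) := Real.sq_sqrt (Nat.cast_nonneg m)
    rw [mul_pow, h]
    ring
  rw [h2] at hCS
  have h3 : (0:ℝ) ≤ 2 ^ m * Real.sqrt m := by positivity
  calc ∑ b : Fin m → Bool, |∑ i, epsR b i|
      = Real.sqrt ((∑ b : Fin m → Bool, |∑ i, epsR b i|) ^ 2) :=
        (Real.sqrt_sq hnn).symm
    _ ≤ Real.sqrt ((2 ^ m * Real.sqrt m) ^ 2) := Real.sqrt_le_sqrt hCS
    _ = 2 ^ m * Real.sqrt m := Real.sqrt_sq h3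

/-- Total pivotality bound for threshold functions of signed weights. -/
lemma pivotal_bound (m : ℕ) (a : Fin m → ℝ) (c s : ℝ) :
    ∑ i : Fin m, ∑ b : Fin m → Bool,
        pivInd s (a i) (c + ∑ i' ∈ Finset.univ.erase i, epsR b i' * a i')
      ≤ 2 ^ m * (2 * Real.sqrt m) := by
  -- reduce to nonnegative weights via reflection
  suffices hnn : ∀ a : Fin m → ℝ, (∀ i, 0 ≤ a i) →
      ∑ i : Fin m, ∑ b : Fin m → Bool,
          pivInd s (a i) (c + ∑ i' ∈ Finset.univ.erase i, epsR b i' * a i')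
        ≤ 2 ^ m * (2 * Real.sqrt m) by
    have hrefl : ∀ i : Fin m,
        ∑ b : Fin m → Bool, pivInd s (a i) (c + ∑ i' ∈ Finset.univ.erase i, epsR b i' * a i')
          = ∑ b : Fin m → Bool,
              pivInd s (|a i|) (c + ∑ i' ∈ Finset.univ.erase i, epsR b i' * |a i'|) := by
      intro i
      have hkey : ∀ (b : Fin m → Bool) (i' : Fin m),
          epsR (fun i'' => Bool.xor (decide (a i'' < 0)) (b i'')) i' * a i'
            = epsR b i' * |a i'| := by
        intro b i'
        rcases lt_or_ge (a i') 0 with h | h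
        · have hd : decide (a i' < 0) = true := decide_eq_true h
          cases hb : b i' <;>
            simp [epsR, hd, hb, abs_of_neg h] <;> ring
        · have hd : decide (a i' < 0) = false := decide_eq_false (not_lt.mpr h)
          cases hb : b i' <;>
            simp [epsR, hd, hb, abs_of_nonneg h]
      have hbij : Function.Bijective
          (fun (b : Fin m → Bool) => (fun i'' => Bool.xor (decide (a i'' < 0)) (b i''))) := by
        apply Function.Involutive.bijective
        intro b
        funext i''
        cases hd : decide (a i'' < 0) <;> cases hb : b i'' <;> simp [hd, hb]
      symm
      refine Fintype.sum_bijective _ hbij _ _ fun b => ?_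
      rw [pivInd_abs s (a i)]
      congr 2
      exact (Finset.sum_congr rfl fun i' _ => hkey b i').symm
    calc ∑ i : Fin m, ∑ b : Fin m → Bool,
          pivInd s (a i) (c + ∑ i' ∈ Finset.univ.erase i, epsR b i' * a i')
        = ∑ i : Fin m, ∑ b : Fin m → Bool,
            pivInd s (|a i|) (c + ∑ i' ∈ Finset.univ.erase i, epsR b i' * |a i'|) :=
          Finset.sum_congr rfl fun i _ => hrefl i
      _ ≤ 2 ^ m * (2 * Real.sqrt m) := hnn (fun i => |a i|) (fun i => abs_nonneg _)
  -- now the monotone case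
  intro a ha
  classical
  set g : (Fin m → Bool) → ℝ := fun b => if s < c + ∑ i, epsR b i * a i then 1 else 0 with hg
  have hg01 : ∀ b, 0 ≤ g b ∧ g b ≤ 1 := by
    intro b; rw [hg]; constructor <;> (dsimp only; split_ifs <;> norm_num)
  -- step 1 : pivotal indicator as a difference
  have step1 : ∀ (i : Fin m) (b : Fin m → Bool),
      pivInd s (a i) (c + ∑ i' ∈ Finset.univ.erase i, epsR b i' * a i')
        = g (Function.update b i false) - g (Function.update b i true) := by
    intro i b
    have hsum_f : ∑ i', epsR (Function.update b i false) i' * a i'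
        = (∑ i' ∈ Finset.univ.erase i, epsR b i' * a i') + a i := by
      rw [← Finset.sum_erase_add Finset.univ _ (Finset.mem_univ i)]
      congr 1
      · refine Finset.sum_congr rfl fun i' hi' => ?_
        have : i' ≠ i := (Finset.mem_erase.mp hi').1
        rw [show epsR (Function.update b i false) i' = epsR b i' by
          unfold epsR; rw [Function.update_of_ne this]]
      · unfold epsR; rw [Function.update_self]; simp
    have hsum_t : ∑ i', epsR (Function.update b i true) i' * a i'
        = (∑ i' ∈ Finset.univ.erase i, epsR b i' * a i') + (-1) * a i := by
      rw [← Finset.sum_erase_add Finset.univ _ (Finset.mem_univ i)]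
      congr 1
      · refine Finset.sum_congr rfl fun i' hi' => ?_
        have : i' ≠ i := (Finset.mem_erase.mp hi').1
        rw [show epsR (Function.update b i true) i' = epsR b i' by
          unfold epsR; rw [Function.update_of_ne this]]
      · unfold epsR; rw [Function.update_self]; simp
    rw [hg]
    simp only [hsum_f, hsum_t]
    unfold pivInd
    rw [abs_of_nonneg (ha i)]
    set R := ∑ i' ∈ Finset.univ.erase i, epsR b i' * a i' with hR
    by_cases h2 : s < c + (R + a i)
    · by_cases h3 : s < c + (R + (-1) * a i)
      · have hnp : ¬ (s - a i < c + R ∧ c + R ≤ s + a i) := by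
          rintro ⟨u, v⟩; linarith
        rw [if_neg hnp, if_pos h2, if_pos h3]; ring
      · have hp : s - a i < c + R ∧ c + R ≤ s + a i :=
          ⟨by linarith, by linarith⟩
        rw [if_pos hp, if_pos h2, if_neg h3]; ring
    · have h3 : ¬ s < c + (R + (-1) * a i) := by
        have := ha i; intro hcon; apply h2; linarith
      have hnp : ¬ (s - a i < c + R ∧ c + R ≤ s + a i) := by
        rintro ⟨u, v⟩; apply h2; linarith
      rw [if_neg hnp, if_neg h2, if_neg h3]; ring
  -- step 2 : summing the difference over the cube
  have step2 : ∀ i : Fin m,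
      ∑ b : Fin m → Bool, (g (Function.update b i false) - g (Function.update b i true))
        = 2 * ∑ b : Fin m → Bool, g b * epsR b i := by
    intro i
    rw [sum_split_i i (fun b => g (Function.update b i false) - g (Function.update b i true)),
        sum_split_i i (fun b => g b * epsR b i)]
    rw [Finset.mul_sum]
    refine Finset.sum_congr rfl fun b hb => ?_
    simp only [Finset.mem_filter, Finset.mem_univ, true_and] at hb
    have e1 : Function.update b i false = b := by rw [← hb, Function.update_eq_self]
    have e2 : Function.update (Function.update b i true) i false = b := by
      rw [Function.update_idem, ← hb, Function.update_eq_self]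
    have e3 : Function.update (Function.update b i true) i true
        = Function.update b i true := by rw [Function.update_idem]
    have e4 : epsR b i = 1 := by unfold epsR; rw [hb]; simp
    have e5 : epsR (Function.update b i true) i = -1 := by
      unfold epsR; rw [Function.update_self]; simp
    rw [e1, e2, e3, e4, e5]
    ring
  calc ∑ i : Fin m, ∑ b : Fin m → Bool,
        pivInd s (a i) (c + ∑ i' ∈ Finset.univ.erase i, epsR b i' * a i')
      = ∑ i : Fin m, ∑ b : Fin m → Bool,
          (g (Function.update b i false) - g (Function.update b i true)) :=
        Finset.sum_congr rfl fun i _ => Finset.sum_congr rfl fun b _ => step1 i b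
    _ = ∑ i : Fin m, 2 * ∑ b : Fin m → Bool, g b * epsR b i :=
        Finset.sum_congr rfl fun i _ => step2 i
    _ = 2 * ∑ b : Fin m → Bool, g b * (∑ i, epsR b i) := by
        rw [← Finset.mul_sum, Finset.sum_comm]
        congr 1
        exact Finset.sum_congr rfl fun b _ => (Finset.mul_sum _ _ _).symm
    _ ≤ 2 * ∑ b : Fin m → Bool, |∑ i, epsR b i| := by
        have : ∀ b : Fin m → Bool, g b * (∑ i, epsR b i) ≤ |∑ i, epsR b i| := by
          intro b
          obtain ⟨h0, h1⟩ := hg01 b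
          calc g b * (∑ i, epsR b i) ≤ |g b * (∑ i, epsR b i)| := le_abs_self _
            _ = g b * |∑ i, epsR b i| := by rw [abs_mul, abs_of_nonneg h0]
            _ ≤ 1 * |∑ i, epsR b i| := by
                exact mul_le_mul_of_nonneg_right h1 (abs_nonneg _)
            _ = |∑ i, epsR b i| := one_mul _
        have hs : ∑ b : Fin m → Bool, g b * (∑ i, epsR b i)
            ≤ ∑ b : Fin m → Bool, |∑ i, epsR b i| :=
          Finset.sum_le_sum (fun b _ => this b)
        linarith
    _ ≤ 2 * (2 ^ m * Real.sqrt m) := by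
        have := sum_abs_L (m := m)
        linarith
    _ = 2 ^ m * (2 * Real.sqrt m) := by ring

/-! #### Block decomposition -/

/-- The union of the blocks selected by `b`. -/
def blkB {m : ℕ} (sel : Fin m → ι → Bool) (b : Fin m → Bool) (j : ι) : Bool :=
  decide (∃ i, b i = true ∧ sel i j = true)

/-- The signed weight carried by block `i`. -/
noncomputable def aB {m : ℕ} (w : ι → ℝ) (sel : Fin m → ι → Bool) (i : Fin m)
    (z : ι → Bool) : ℝ :=
  ∑ j, if sel i j = true then sg z j * w j else 0

/-- The signed weight outside all blocks. -/
noncomputable def cB {m : ℕ} (w : ι → ℝ) (sel : Fin m → ι → Bool) (z : ι → Bool) : ℝ :=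
  ∑ j, if ∃ i, sel i j = true then 0 else sg z j * w j

/-- Everything except the contribution of block `i`. -/
noncomputable def rB {m : ℕ} (w : ι → ℝ) (sel : Fin m → ι → Bool) (i : Fin m)
    (b : Fin m → Bool) (z : ι → Bool) : ℝ :=
  cB w sel z + ∑ i' ∈ Finset.univ.erase i, epsR b i' * aB w sel i' z

lemma sg_flip (F x : ι → Bool) (j : ι) :
    sg (flipF F x) j = if F j = true then -sg x j else sg x j := by
  unfold sg flipF
  cases F j <;> cases x j <;> norm_num

lemma sg_flip_eq (F x : ι → Bool) (j : ι) (h : F j = false) :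
    sg (flipF F x) j = sg x j := by
  rw [sg_flip, h]; simp

/-- Key identity: the weighted sum after flipping the blocks chosen by `b`. -/
lemma wsum_flip_blk {m : ℕ} (w : ι → ℝ) (sel : Fin m → ι → Bool)
    (hdisj : ∀ j i₁ i₂, sel i₁ j = true → sel i₂ j = true → i₁ = i₂)
    (b : Fin m → Bool) (z : ι → Bool) :
    Wsum w (flipF (blkB sel b) z) = cB w sel z + ∑ i, epsR b i * aB w sel i z := by
  unfold Wsum cB aB
  have hrhs : ∑ i, epsR b i * ∑ j, (if sel i j = true then sg z j * w j else 0)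
      = ∑ j, ∑ i, epsR b i * (if sel i j = true then sg z j * w j else 0) := by
    rw [show (∑ i, epsR b i * ∑ j, (if sel i j = true then sg z j * w j else 0))
        = ∑ i, ∑ j, epsR b i * (if sel i j = true then sg z j * w j else 0) from
      Finset.sum_congr rfl fun i _ => Finset.mul_sum _ _ _]
    exact Finset.sum_comm
  rw [hrhs, ← Finset.sum_add_distrib]
  refine Finset.sum_congr rfl fun j _ => ?_
  by_cases hE : ∃ i, sel i j = true
  · obtain ⟨i₀, hi₀⟩ := hE
    have hsum : ∑ i, epsR b i * (if sel i j = true then sg z j * w j else 0)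
        = epsR b i₀ * (sg z j * w j) := by
      rw [Finset.sum_eq_single i₀]
      · rw [if_pos hi₀]
      · intro i _ hne
        rw [if_neg, mul_zero]
        intro hsel
        exact hne (hdisj j i i₀ hsel hi₀)
      · intro h; exact absurd (Finset.mem_univ i₀) h
    rw [hsum, if_pos ⟨i₀, hi₀⟩]
    by_cases hb : b i₀ = true
    · have hblk : blkB sel b j = true := decide_eq_true ⟨i₀, hb, hi₀⟩
      rw [sg_flip, hblk, if_pos rfl]
      have : epsR b i₀ = -1 := by unfold epsR; rw [hb]; simp
      rw [this]; ring
    · have hblk : blkB sel b j = false := by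
        apply decide_eq_false
        rintro ⟨i', hbi', hsel'⟩
        exact hb ((hdisj j i' i₀ hsel' hi₀) ▸ hbi')
      rw [sg_flip_eq _ _ _ hblk]
      have hb' : b i₀ = false := by
        cases h' : b i₀
        · rfl
        · exact absurd h' hb
      have : epsR b i₀ = 1 := by unfold epsR; rw [hb']; simp
      rw [this]; ring
  · have hblk : blkB sel b j = false := by
      apply decide_eq_false
      rintro ⟨i', _, hsel'⟩
      exact hE ⟨i', hsel'⟩
    have hsum : ∑ i, epsR b i * (if sel i j = true then sg z j * w j else 0) = 0 := by
      refine Finset.sum_eq_zero fun i _ => ?_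
      rw [if_neg, mul_zero]
      intro hsel; exact hE ⟨i, hsel⟩
    rw [hsum, sg_flip_eq _ _ _ hblk, if_neg hE]
    ring

lemma cB_flip {m : ℕ} (w : ι → ℝ) (sel : Fin m → ι → Bool) (p z : ι → Bool)
    (hp : ∀ j, p j = true → ∃ i, sel i j = true) :
    cB w sel (flipF p z) = cB w sel z := by
  unfold cB
  refine Finset.sum_congr rfl fun j _ => ?_
  by_cases hE : ∃ i, sel i j = true
  · rw [if_pos hE, if_pos hE]
  · have hpj : p j = false := by
      cases h' : p j
      · rfl
      · exact absurd (hp j h') hE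
    rw [if_neg hE, if_neg hE, sg_flip_eq _ _ _ hpj]

lemma aB_flip_ne {m : ℕ} (w : ι → ℝ) (sel : Fin m → ι → Bool)
    (hdisj : ∀ j i₁ i₂, sel i₁ j = true → sel i₂ j = true → i₁ = i₂)
    (i i' : Fin m) (hne : i' ≠ i) (p z : ι → Bool)
    (hp : ∀ j, p j = true → sel i j = true) :
    aB w sel i' (flipF p z) = aB w sel i' z := by
  unfold aB
  refine Finset.sum_congr rfl fun j _ => ?_
  by_cases hs : sel i' j = true
  · have hpj : p j = false := by
      cases h' : p j
      · rfl
      · exact absurd (hdisj j i' i hs (hp j h')) hne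
    rw [if_pos hs, if_pos hs, sg_flip_eq _ _ _ hpj]
  · rw [if_neg hs, if_neg hs]

lemma aB_flip_own {m : ℕ} (w : ι → ℝ) (sel : Fin m → ι → Bool) (i : Fin m)
    (F z : ι → Bool) :
    aB w sel i (flipF (fun j => sel i j && F j) z) = aB w sel i (flipF F z) := by
  unfold aB
  refine Finset.sum_congr rfl fun j _ => ?_
  by_cases hs : sel i j = true
  · rw [if_pos hs, if_pos hs]
    have : flipF (fun j => sel i j && F j) z j = flipF F z j := by
      unfold flipF; dsimp only; rw [hs, Bool.true_and]
    unfold sg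
    rw [this]
  · rw [if_neg hs, if_neg hs]

lemma rB_flip {m : ℕ} (w : ι → ℝ) (sel : Fin m → ι → Bool)
    (hdisj : ∀ j i₁ i₂, sel i₁ j = true → sel i₂ j = true → i₁ = i₂)
    (i : Fin m) (b : Fin m → Bool) (F z : ι → Bool) :
    rB w sel i b (flipF (fun j => sel i j && F j) z) = rB w sel i b z := by
  unfold rB
  have hp : ∀ j, (sel i j && F j) = true → sel i j = true := by
    intro j h
    exact (Bool.and_eq_true _ _ |>.mp h).1
  rw [cB_flip w sel _ z (fun j h => ⟨i, hp j h⟩)]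
  congr 1
  refine Finset.sum_congr rfl fun i' hi' => ?_
  have hne : i' ≠ i := (Finset.mem_erase.mp hi').1
  rw [aB_flip_ne w sel hdisj i i' hne _ z hp]

/-- Arithmetic core: a threshold crossing forces one of two pivotal events. -/
lemma ineq_piv (e v v' ρ s : ℝ) (he : e = 1 ∨ e = -1) :
    (if s < ρ + e * v ∧ ¬ s < ρ + e * v' then (1:ℝ) else 0)
      ≤ pivInd s v ρ + pivInd s v' ρ := by
  have hev : e * v ≤ |v| := by
    rcases he with rfl | rfl
    · rw [one_mul]; exact le_abs_self v
    · rw [neg_one_mul]; exact neg_le_abs v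
  have hev' : -|v'| ≤ e * v' := by
    rcases he with rfl | rfl
    · rw [one_mul]; exact neg_abs_le v'
    · rw [neg_one_mul]
      have := le_abs_self v'
      linarith
  by_cases h1 : s < ρ + e * v ∧ ¬ s < ρ + e * v'
  · obtain ⟨hA, hB⟩ := h1
    push_neg at hB
    rw [if_pos ⟨hA, by push_neg; exact hB⟩]
    unfold pivInd
    by_cases h2 : ρ ≤ s + |v|
    · have hfirst : s - |v| < ρ := by linarith
      rw [if_pos ⟨hfirst, h2⟩]
      have := pivInd_nonneg s v' ρ
      unfold pivInd at this
      linarith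
    · push_neg at h2
      have hsecond : s - |v'| < ρ ∧ ρ ≤ s + |v'| := by
        constructor
        · have h0 : (0:ℝ) ≤ |v| := abs_nonneg v
          have h0' : (0:ℝ) ≤ |v'| := abs_nonneg v'
          linarith
        · linarith
      rw [if_pos hsecond]
      split_ifs <;> norm_num
  · rw [if_neg h1]
    have := pivInd_nonneg s v ρ
    have := pivInd_nonneg s v' ρ
    linarith

/-- Pointwise crossing bound. -/
lemma cross_le_piv {m : ℕ} (w : ι → ℝ) (s : ℝ) (sel : Fin m → ι → Bool)
    (hdisj : ∀ j i₁ i₂, sel i₁ j = true → sel i₂ j = true → i₁ = i₂)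
    (i : Fin m) (b : Fin m → Bool) (z F : ι → Bool) :
    offInd w s (flipF (blkB sel b) z)
        (flipF (fun j => sel i j && F j) (flipF (blkB sel b) z))
      ≤ pivInd s (aB w sel i z) (rB w sel i b z)
        + pivInd s (aB w sel i (flipF F z)) (rB w sel i b z) := by
  have hp : ∀ j, (sel i j && F j) = true → sel i j = true := fun j h =>
    (Bool.and_eq_true _ _ |>.mp h).1
  have hV1 : Wsum w (flipF (blkB sel b) z)
      = rB w sel i b z + epsR b i * aB w sel i z := by
    rw [wsum_flip_blk w sel hdisj b z]
    unfold rB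
    rw [← Finset.sum_erase_add Finset.univ _ (Finset.mem_univ i)]
    ring
  have hV2 : Wsum w (flipF (fun j => sel i j && F j) (flipF (blkB sel b) z))
      = rB w sel i b z + epsR b i * aB w sel i (flipF F z) := by
    rw [flipF_comm]
    rw [wsum_flip_blk w sel hdisj b (flipF (fun j => sel i j && F j) z)]
    rw [← Finset.sum_erase_add Finset.univ _ (Finset.mem_univ i)]
    rw [cB_flip w sel _ z (fun j h => ⟨i, hp j h⟩)]
    rw [aB_flip_own w sel i F z]
    rw [show (∑ i' ∈ Finset.univ.erase i,
          epsR b i' * aB w sel i' (flipF (fun j => sel i j && F j) z))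
        = ∑ i' ∈ Finset.univ.erase i, epsR b i' * aB w sel i' z from
      Finset.sum_congr rfl fun i' hi' => by
        rw [aB_flip_ne w sel hdisj i i' (Finset.mem_erase.mp hi').1 _ z hp]]
    unfold rB
    ring
  unfold offInd
  rw [hV1, hV2]
  exact ineq_piv (epsR b i) (aB w sel i z) (aB w sel i (flipF F z)) (rB w sel i b z) s
    (epsR_cases b i)

/-- Exchangeability of a block with its resampled copy. -/
lemma exch_piv {m : ℕ} (w : ι → ℝ) (s : ℝ) (sel : Fin m → ι → Bool)
    (hdisj : ∀ j i₁ i₂, sel i₁ j = true → sel i₂ j = true → i₁ = i₂)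
    (i : Fin m) (b : Fin m → Bool) (F : ι → Bool) :
    ∑ z : ι → Bool, pivInd s (aB w sel i (flipF F z)) (rB w sel i b z)
      = ∑ z : ι → Bool, pivInd s (aB w sel i z) (rB w sel i b z) := by
  refine Fintype.sum_bijective (flipF (fun j => sel i j && F j))
    (flipF_invol _).bijective _ _ fun z => ?_
  rw [rB_flip w sel hdisj i b F z, aB_flip_own w sel i F z]

lemma two_pow_card_fun : ∑ _F : ι → Bool, (1:ℝ) = 2 ^ Fintype.card ι := by
  rw [Finset.sum_const, Finset.card_univ, Fintype.card_fun, Fintype.card_bool, nsmul_eq_mul]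
  push_cast
  ring

/-- The core block bound: averaging over which block is resampled. -/
lemma blockBound (w : ι → ℝ) (s : ℝ) (m : ℕ) (sel : Fin m → ι → Bool)
    (hdisj : ∀ j i₁ i₂, sel i₁ j = true → sel i₂ j = true → i₁ = i₂) :
    ∑ i : Fin m, ∑ x : ι → Bool, ∑ F : ι → Bool,
        offInd w s x (flipF (fun j => sel i j && F j) x)
      ≤ 4 ^ Fintype.card ι * (4 * Real.sqrt m) := by
  classical
  set n := Fintype.card ι with hn
  set T := ∑ i : Fin m, ∑ x : ι → Bool, ∑ F : ι → Bool,
      offInd w s x (flipF (fun j => sel i j && F j) x) with hT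
  have hb : ∀ b : Fin m → Bool, T = ∑ i : Fin m, ∑ F : ι → Bool, ∑ z : ι → Bool,
      offInd w s (flipF (blkB sel b) z)
        (flipF (fun j => sel i j && F j) (flipF (blkB sel b) z)) := by
    intro b
    rw [hT]
    refine Finset.sum_congr rfl fun i _ => ?_
    rw [Finset.sum_comm]
    refine Finset.sum_congr rfl fun F _ => ?_
    exact sum_flipF_dom (blkB sel b)
      (fun x => offInd w s x (flipF (fun j => sel i j && F j) x))
  have hTpow : (2:ℝ) ^ m * T = ∑ b : Fin m → Bool, T := by
    rw [Finset.sum_const, Finset.card_univ, card_cube, nsmul_eq_mul]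
    push_cast
    ring
  have hmain : ∑ b : Fin m → Bool, T ≤ (2:ℝ)^m * (4 ^ n * (4 * Real.sqrt m)) := by
    calc ∑ b : Fin m → Bool, T
        = ∑ b : Fin m → Bool, ∑ i : Fin m, ∑ F : ι → Bool, ∑ z : ι → Bool,
            offInd w s (flipF (blkB sel b) z)
              (flipF (fun j => sel i j && F j) (flipF (blkB sel b) z)) :=
          Finset.sum_congr rfl fun b _ => hb b
      _ ≤ ∑ b : Fin m → Bool, ∑ i : Fin m, ∑ F : ι → Bool, ∑ z : ι → Bool,
            (pivInd s (aB w sel i z) (rB w sel i b z)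
              + pivInd s (aB w sel i (flipF F z)) (rB w sel i b z)) := by
          refine Finset.sum_le_sum fun b _ => Finset.sum_le_sum fun i _ =>
            Finset.sum_le_sum fun F _ => Finset.sum_le_sum fun z _ => ?_
          exact cross_le_piv w s sel hdisj i b z F
      _ = ∑ b : Fin m → Bool, ∑ i : Fin m, ∑ F : ι → Bool,
            (2 * ∑ z : ι → Bool, pivInd s (aB w sel i z) (rB w sel i b z)) := by
          refine Finset.sum_congr rfl fun b _ => Finset.sum_congr rfl fun i _ =>
            Finset.sum_congr rfl fun F _ => ?_
          rw [Finset.sum_add_distrib, exch_piv w s sel hdisj i b F, two_mul]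
      _ = ∑ b : Fin m → Bool, ∑ i : Fin m,
            ((2:ℝ)^n * (2 * ∑ z : ι → Bool, pivInd s (aB w sel i z) (rB w sel i b z))) := by
          refine Finset.sum_congr rfl fun b _ => Finset.sum_congr rfl fun i _ => ?_
          rw [Finset.sum_const, Finset.card_univ, Fintype.card_fun, Fintype.card_bool,
            nsmul_eq_mul, hn]
          push_cast
          ring
      _ = (2:ℝ)^n * 2 * ∑ b : Fin m → Bool, ∑ i : Fin m,
            ∑ z : ι → Bool, pivInd s (aB w sel i z) (rB w sel i b z) := by
          simp only [Finset.mul_sum]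
          refine Finset.sum_congr rfl fun b _ => Finset.sum_congr rfl fun i _ =>
            Finset.sum_congr rfl fun z _ => by ring
      _ = (2:ℝ)^n * 2 * ∑ z : ι → Bool, ∑ i : Fin m,
            ∑ b : Fin m → Bool, pivInd s (aB w sel i z) (rB w sel i b z) := by
          congr 1
          calc ∑ b : Fin m → Bool, ∑ i : Fin m, ∑ z : ι → Bool,
                pivInd s (aB w sel i z) (rB w sel i b z)
              = ∑ i : Fin m, ∑ b : Fin m → Bool, ∑ z : ι → Bool,
                pivInd s (aB w sel i z) (rB w sel i b z) := Finset.sum_comm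
            _ = ∑ i : Fin m, ∑ z : ι → Bool, ∑ b : Fin m → Bool,
                pivInd s (aB w sel i z) (rB w sel i b z) :=
              Finset.sum_congr rfl fun i _ => Finset.sum_comm
            _ = ∑ z : ι → Bool, ∑ i : Fin m, ∑ b : Fin m → Bool,
                pivInd s (aB w sel i z) (rB w sel i b z) := Finset.sum_comm
      _ ≤ (2:ℝ)^n * 2 * ∑ _z : ι → Bool, ((2:ℝ)^m * (2 * Real.sqrt m)) := by
          have hz : ∀ z : ι → Bool, ∑ i : Fin m, ∑ b : Fin m → Bool,
              pivInd s (aB w sel i z) (rB w sel i b z) ≤ (2:ℝ)^m * (2 * Real.sqrt m) := by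
            intro z
            have := pivotal_bound m (fun i => aB w sel i z) (cB w sel z) s
            simpa [rB] using this
          have hpos : (0:ℝ) ≤ (2:ℝ)^n * 2 := by positivity
          exact mul_le_mul_of_nonneg_left (Finset.sum_le_sum fun z _ => hz z) hpos
      _ = (2:ℝ)^m * (4 ^ n * (4 * Real.sqrt m)) := by
          rw [Finset.sum_const, Finset.card_univ, Fintype.card_fun, Fintype.card_bool,
            nsmul_eq_mul, hn]
          have h4 : (4:ℝ) ^ n = 2^n * 2^n := by
            rw [← mul_pow]; norm_num
          rw [h4]
          push_cast
          ring
  have h2m : (0:ℝ) < 2 ^ m := by positivity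
  have h2 : (2:ℝ) ^ m * T ≤ (2:ℝ)^m * (4 ^ n * (4 * Real.sqrt m)) := by
    rw [hTpow]; exact hmain
  exact le_of_mul_le_mul_left h2 h2m

/-! #### Factorisation of the flip measure through labels and coins -/

/-- Pushforward of a product measure along a pointwise map into `Bool`. -/
lemma pushforward {κ : Type} [Fintype κ] [DecidableEq κ] (μ : κ → ℝ) (β : κ → Bool)
    (X : (ι → Bool) → ℝ) :
    ∑ t : ι → κ, (∏ j, μ (t j)) * X (fun j => β (t j))
      = ∑ η : ι → Bool,
          (∏ j, ∑ k ∈ Finset.univ.filter (fun k => β k = η j), μ k) * X η := by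
  classical
  rw [← Finset.sum_fiberwise_of_maps_to
      (g := fun t : ι → κ => (fun j => β (t j)))
      (t := (Finset.univ : Finset (ι → Bool)))
      (fun _ _ => Finset.mem_univ _)
      (fun t => (∏ j, μ (t j)) * X (fun j => β (t j)))]
  refine Finset.sum_congr rfl fun η _ => ?_
  have hXconst : ∀ t ∈ Finset.univ.filter
      (fun t : ι → κ => (fun j => β (t j)) = η),
      (∏ j, μ (t j)) * X (fun j => β (t j)) = (∏ j, μ (t j)) * X η := by
    intro t ht
    simp only [Finset.mem_filter, Finset.mem_univ, true_and] at ht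
    rw [ht]
  rw [Finset.sum_congr rfl hXconst, ← Finset.sum_mul]
  congr 1
  have hset : Finset.univ.filter (fun t : ι → κ => (fun j => β (t j)) = η)
      = Fintype.piFinset (fun j => Finset.univ.filter (fun k => β k = η j)) := by
    ext t
    simp only [Finset.mem_filter, Finset.mem_univ, true_and, Fintype.mem_piFinset,
      funext_iff]
  rw [hset, ← Finset.prod_univ_sum]

/-- Per-coordinate weight on label/coin pairs. -/
noncomputable def kw (m : ℕ) (q : ℝ) (k : Fin m × Bool) : ℝ :=
  (if k.2 then q else 1 - q) / m

/-- Whether coordinate-datum `k` belongs to block `i` (label `i` and coin true). -/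
def selK {m : ℕ} (i : Fin m) (k : Fin m × Bool) : Bool := decide (k.1 = i) && k.2

lemma kw_nonneg {m : ℕ} {q : ℝ} (hq0 : 0 ≤ q) (hq1 : q ≤ 1) (k : Fin m × Bool) :
    0 ≤ kw m q k := by
  unfold kw
  apply div_nonneg _ (Nat.cast_nonneg m)
  split_ifs <;> linarith

lemma sum_kw {m : ℕ} (hm : 0 < m) (q : ℝ) : ∑ k : Fin m × Bool, kw m q k = 1 := by
  unfold kw
  rw [Fintype.sum_prod_type]
  have : ∀ l : Fin m, ∑ c : Bool, (if c then q else 1 - q) / (m:ℝ) = 1 / m := by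
    intro l
    rw [Fintype.sum_bool]
    rw [if_pos rfl, if_neg (by simp)]
    ring
  rw [Finset.sum_congr rfl fun l _ => this l]
  rw [Finset.sum_const, Finset.card_univ, Fintype.card_fin, nsmul_eq_mul]
  have hm' : (m:ℝ) ≠ 0 := Nat.cast_ne_zero.mpr hm.ne'
  field_simp

lemma sum_prod_kw {m : ℕ} (hm : 0 < m) (q : ℝ) :
    ∑ u : ι → Fin m × Bool, ∏ j, kw m q (u j) = 1 := by
  rw [← Fintype.piFinset_univ,
    ← Finset.prod_univ_sum (fun _ : ι => (Finset.univ : Finset (Fin m × Bool)))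
      (fun _ k => kw m q k)]
  rw [Finset.prod_congr rfl fun j _ => sum_kw hm q]
  exact Finset.prod_const_one

/-- The factorisation of the Bernoulli-ε flip measure through (label, coin, coin). -/
lemma pw_decompose (m : ℕ) (hm : 0 < m) (ε : ℝ) (i : Fin m) (X : (ι → Bool) → ℝ) :
    ∑ F : ι → Bool, pw ε F * X F
      = ∑ u : ι → Fin m × Bool, (∏ j, kw m (2*ε*m) (u j)) *
          ((∑ F : ι → Bool, X (fun j => selK i (u j) && F j)) / 2 ^ Fintype.card ι) := by
  classical
  set q : ℝ := 2*ε*m with hqdef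
  have hm' : (m:ℝ) ≠ 0 := Nat.cast_ne_zero.mpr hm.ne'
  -- masses
  have hfilterT : (Finset.univ.filter
      (fun k : (Fin m × Bool) × Bool => (selK i k.1 && k.2) = true))
      = {((i, true), true)} := by
    ext ⟨⟨l, c⟩, f⟩
    simp only [Finset.mem_filter, Finset.mem_univ, true_and, Finset.mem_singleton,
      selK, Bool.and_eq_true, decide_eq_true_eq, Prod.mk.injEq]
  have hmassT : ∑ k ∈ Finset.univ.filter
      (fun k : (Fin m × Bool) × Bool => (selK i k.1 && k.2) = true),
      (kw m q k.1 * (2:ℝ)⁻¹) = ε := by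
    rw [hfilterT, Finset.sum_singleton]
    unfold kw
    simp only [if_pos rfl]
    rw [hqdef]
    field_simp
    simp
  have htot : ∑ k : (Fin m × Bool) × Bool, (kw m q k.1 * (2:ℝ)⁻¹) = 1 := by
    rw [Fintype.sum_prod_type]
    have : ∀ k1 : Fin m × Bool, ∑ f : Bool, kw m q k1 * (2:ℝ)⁻¹ = kw m q k1 := by
      intro k1
      rw [Fintype.sum_bool]
      try ring
    rw [Finset.sum_congr rfl fun k1 _ => this k1]
    exact sum_kw hm q
  have hmassF : ∑ k ∈ Finset.univ.filter
      (fun k : (Fin m × Bool) × Bool => (selK i k.1 && k.2) = false),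
      (kw m q k.1 * (2:ℝ)⁻¹) = 1 - ε := by
    have hsplit := Finset.sum_filter_add_sum_filter_not Finset.univ
      (fun k : (Fin m × Bool) × Bool => (selK i k.1 && k.2) = true)
      (fun k => kw m q k.1 * (2:ℝ)⁻¹)
    rw [htot] at hsplit
    have hfeq : Finset.univ.filter
        (fun k : (Fin m × Bool) × Bool => ¬ ((selK i k.1 && k.2) = true))
        = Finset.univ.filter
          (fun k : (Fin m × Bool) × Bool => (selK i k.1 && k.2) = false) := by
      refine Finset.filter_congr fun k _ => ?_
      simp
    rw [hfeq, hmassT] at hsplit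
    linarith
  -- pushforward on the big space
  have hpush := pushforward (κ := (Fin m × Bool) × Bool)
    (μ := fun k => kw m q k.1 * (2:ℝ)⁻¹)
    (β := fun k => selK i k.1 && k.2) X
  have hpw : ∀ η : ι → Bool,
      (∏ j, ∑ k ∈ Finset.univ.filter
        (fun k : (Fin m × Bool) × Bool => (selK i k.1 && k.2) = η j),
        (kw m q k.1 * (2:ℝ)⁻¹)) = pw ε η := by
    intro η
    unfold pw
    refine Finset.prod_congr rfl fun j _ => ?_
    cases hηj : η j
    · rw [if_neg (by simp)]
      exact hmassF
    · rw [if_pos rfl]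
      exact hmassT
  have hpush2 : (∑ t : ι → (Fin m × Bool) × Bool,
      (∏ j, kw m q (t j).1 * (2:ℝ)⁻¹) * X (fun j => selK i (t j).1 && (t j).2))
      = ∑ η : ι → Bool, pw ε η * X η :=
    hpush.trans (Finset.sum_congr rfl fun η _ => by rw [hpw η])
  rw [← hpush2]
  -- split the big function space
  have hbij : Function.Bijective
      (fun p : (ι → Fin m × Bool) × (ι → Bool) => (fun j => (p.1 j, p.2 j) :
        ι → (Fin m × Bool) × Bool)) := by
    apply Function.bijective_iff_has_inverse.mpr
    refine ⟨fun t => (fun j => (t j).1, fun j => (t j).2), fun p => rfl, fun t => rfl⟩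
  calc ∑ t : ι → (Fin m × Bool) × Bool,
        (∏ j, kw m q (t j).1 * (2:ℝ)⁻¹) * X (fun j => selK i (t j).1 && (t j).2)
      = ∑ p : (ι → Fin m × Bool) × (ι → Bool),
          (∏ j, kw m q (p.1 j) * (2:ℝ)⁻¹) * X (fun j => selK i (p.1 j) && p.2 j) :=
        (Fintype.sum_bijective _ hbij _ _ (fun p => rfl)).symm
    _ = ∑ u : ι → Fin m × Bool, ∑ F : ι → Bool,
          (∏ j, kw m q (u j) * (2:ℝ)⁻¹) * X (fun j => selK i (u j) && F j) :=
        Fintype.sum_prod_type _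
    _ = ∑ u : ι → Fin m × Bool, (∏ j, kw m q (u j)) *
          ((∑ F : ι → Bool, X (fun j => selK i (u j) && F j)) / 2 ^ Fintype.card ι) := by
        refine Finset.sum_congr rfl fun u _ => ?_
        rw [Finset.prod_mul_distrib, Finset.prod_const, Finset.card_univ, ← Finset.mul_sum,
          div_eq_mul_inv, ← inv_pow]
        ring

/-- The core quantitative bound: one-sided noise sensitivity of a weighted
majority is at most `4 / √m` whenever `2 ε m ≤ 1`. -/
lemma core_bound (w : ι → ℝ) (s ε : ℝ) (m : ℕ) (hm : 0 < m) (hε0 : 0 ≤ ε)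
    (hq1 : 2 * ε * (m:ℝ) ≤ 1) :
    (∑ x : ι → Bool, ∑ F : ι → Bool, pw ε F * offInd w s x (flipF F x))
        / 2 ^ Fintype.card ι
      ≤ 4 / Real.sqrt m := by
  classical
  set n := Fintype.card ι with hn
  set q : ℝ := 2*ε*m with hqdef
  have hmR : (0:ℝ) < m := Nat.cast_pos.mpr hm
  have hq0 : 0 ≤ q := by positivity
  set N : ℝ := ∑ x : ι → Bool, ∑ F : ι → Bool, pw ε F * offInd w s x (flipF F x) with hN
  have hNnn : 0 ≤ N := by
    rw [hN]
    refine Finset.sum_nonneg fun x _ => Finset.sum_nonneg fun F _ => ?_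
    have hm1 : (1:ℝ) ≤ (m:ℝ) := by exact_mod_cast hm
    have hε1 : ε ≤ 1 := by nlinarith [mul_le_mul_of_nonneg_left hm1 (by positivity : (0:ℝ) ≤ 2*ε)]
    exact mul_nonneg (pw_nonneg hε0 hε1 F) (offInd_nonneg w s x _)
  have hiden : ∀ i : Fin m,
      N = ∑ u : ι → Fin m × Bool, (∏ j, kw m q (u j)) *
        ((∑ x : ι → Bool, ∑ F : ι → Bool,
          offInd w s x (flipF (fun j => selK i (u j) && F j) x)) / 2 ^ n) := by
    intro i
    calc N = ∑ x : ι → Bool, ∑ F : ι → Bool, pw ε F * offInd w s x (flipF F x) := hN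
      _ = ∑ x : ι → Bool, ∑ u : ι → Fin m × Bool, (∏ j, kw m q (u j)) *
            ((∑ F : ι → Bool,
              offInd w s x (flipF (fun j => selK i (u j) && F j) x)) / 2 ^ n) :=
          Finset.sum_congr rfl fun x _ =>
            pw_decompose m hm ε i (fun F => offInd w s x (flipF F x))
      _ = ∑ u : ι → Fin m × Bool, ∑ x : ι → Bool, (∏ j, kw m q (u j)) *
            ((∑ F : ι → Bool,
              offInd w s x (flipF (fun j => selK i (u j) && F j) x)) / 2 ^ n) :=
          Finset.sum_comm
      _ = ∑ u : ι → Fin m × Bool, (∏ j, kw m q (u j)) *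
            ((∑ x : ι → Bool, ∑ F : ι → Bool,
              offInd w s x (flipF (fun j => selK i (u j) && F j) x)) / 2 ^ n) := by
          refine Finset.sum_congr rfl fun u _ => ?_
          rw [← Finset.mul_sum, ← Finset.sum_div]
  have hkey : (m:ℝ) * N ≤ 2 ^ n * (4 * Real.sqrt m) := by
    have h1 : (m:ℝ) * N = ∑ _i : Fin m, N := by
      rw [Finset.sum_const, Finset.card_univ, Fintype.card_fin, nsmul_eq_mul]
    rw [h1]
    calc ∑ i : Fin m, N
        = ∑ i : Fin m, ∑ u : ι → Fin m × Bool, (∏ j, kw m q (u j)) *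
            ((∑ x : ι → Bool, ∑ F : ι → Bool,
              offInd w s x (flipF (fun j => selK i (u j) && F j) x)) / 2 ^ n) :=
          Finset.sum_congr rfl fun i _ => hiden i
      _ = ∑ u : ι → Fin m × Bool, (∏ j, kw m q (u j)) *
            ((∑ i : Fin m, ∑ x : ι → Bool, ∑ F : ι → Bool,
              offInd w s x (flipF (fun j => selK i (u j) && F j) x)) / 2 ^ n) := by
          rw [Finset.sum_comm]
          refine Finset.sum_congr rfl fun u _ => ?_
          rw [← Finset.mul_sum, ← Finset.sum_div]
      _ ≤ ∑ u : ι → Fin m × Bool, (∏ j, kw m q (u j)) *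
            ((4 ^ n * (4 * Real.sqrt m)) / 2 ^ n) := by
          refine Finset.sum_le_sum fun u _ => ?_
          have hq1' : q ≤ 1 := hq1
          have hprodnn : 0 ≤ ∏ j, kw m q (u j) :=
            Finset.prod_nonneg fun j _ => kw_nonneg hq0 hq1' (u j)
          refine mul_le_mul_of_nonneg_left ?_ hprodnn
          refine div_le_div_of_nonneg_right ?_ (by positivity)
          · refine blockBound w s m (fun i j => selK i (u j)) ?_
            intro j i₁ i₂ h₁ h₂
            simp only [selK, Bool.and_eq_true, decide_eq_true_eq] at h₁ h₂
            rw [← h₁.1, ← h₂.1]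
      _ = 4 ^ n * (4 * Real.sqrt m) / 2 ^ n := by
          rw [← Finset.sum_mul, sum_prod_kw hm q, one_mul]
      _ = 2 ^ n * (4 * Real.sqrt m) := by
          have h4 : (4:ℝ) ^ n = 2^n * 2^n := by rw [← mul_pow]; norm_num
          have h2n' : ((2:ℝ)^n) ≠ 0 := by positivity
          rw [h4]
          field_simp
  -- conclude
  have h2n : (0:ℝ) < 2 ^ n := by positivity
  have hsm : (0:ℝ) < Real.sqrt m := Real.sqrt_pos.mpr hmR
  rw [div_le_div_iff₀ h2n hsm]
  have hss : Real.sqrt m * Real.sqrt m = (m:ℝ) := Real.mul_self_sqrt hmR.le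
  have h5 : (m:ℝ) * N * Real.sqrt m ≤ 2 ^ n * 4 * (m:ℝ) := by
    have h6 := mul_le_mul_of_nonneg_right hkey hsm.le
    nlinarith [h6, hss]
  have h7 : (m:ℝ) * (N * Real.sqrt m) ≤ (m:ℝ) * (4 * 2 ^ n) := by nlinarith [h5]
  exact le_of_mul_le_mul_left h7 hmR

lemma mem_wmajEvent {n : ℕ} (w : Fin n → ℝ) (s : ℝ) (x : Cube n) :
    x ∈ wmajEvent n w s ↔ s < Wsum w x := by
  unfold wmajEvent Wsum sg
  rw [Finset.mem_filter]
  simp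

lemma probOffDiff_wmaj_eq {n : ℕ} (w : Fin n → ℝ) (s ε : ℝ) :
    probOffDiff ε (wmajEvent n w s)
      = (∑ x : Cube n, ∑ F : Cube n, pw ε F * offInd w s x (flipF F x))
          / 2 ^ Fintype.card (Fin n) := by
  rw [probOffDiff_eq_flip]
  congr 1
  refine Finset.sum_congr rfl fun x _ => Finset.sum_congr rfl fun F _ => ?_
  congr 1
  unfold offInd
  refine if_congr ?_ rfl rfl
  rw [mem_wmajEvent, mem_wmajEvent]

/-- The main quantitative estimate. -/
lemma probOffDiff_wmaj_le {n : ℕ} (w : Fin n → ℝ) (s : ℝ) {ε : ℝ}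
    (hε0 : 0 < ε) (hε1 : ε < 1) :
    probOffDiff ε (wmajEvent n w s) ≤ 8 * ε ^ ((1:ℝ)/4) := by
  have hrpow_nn : (0:ℝ) ≤ ε ^ ((1:ℝ)/4) := Real.rpow_nonneg hε0.le _
  by_cases hε4 : ε ≤ 1/4
  · -- main case : use the block bound with m = ⌈1/(4ε)⌉
    set m : ℕ := ⌈1/(4*ε)⌉₊ with hmdef
    have hx0 : (0:ℝ) < 1/(4*ε) := by positivity
    have hm : 0 < m := Nat.ceil_pos.mpr hx0
    have hmlb : 1/(4*ε) ≤ (m:ℝ) := Nat.le_ceil _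
    have hmub : (m:ℝ) < 1/(4*ε) + 1 := Nat.ceil_lt_add_one hx0.le
    have hq1 : 2 * ε * (m:ℝ) ≤ 1 := by
      have h14 : (1:ℝ) ≤ 1/(4*ε) := by
        rw [le_div_iff₀ (by positivity)]
        linarith
      have hmub2 : (m:ℝ) ≤ 1/(2*ε) := by
        have heq : 1/(4*ε) + 1/(4*ε) = 1/(2*ε) := by
          field_simp
          ring
        linarith
      calc 2 * ε * (m:ℝ) ≤ 2 * ε * (1/(2*ε)) := by
            apply mul_le_mul_of_nonneg_left hmub2 (by positivity)
        _ = 1 := by field_simp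
    have hcore := core_bound w s ε m hm hε0.le hq1
    rw [probOffDiff_wmaj_eq]
    refine le_trans hcore ?_
    -- 4 / √m ≤ 8 √ε ≤ 8 ε^{1/4}
    have hsε : Real.sqrt (1/(4*ε)) ≤ Real.sqrt m := Real.sqrt_le_sqrt hmlb
    have hsε0 : (0:ℝ) < Real.sqrt (1/(4*ε)) := Real.sqrt_pos.mpr hx0
    have step1 : 4 / Real.sqrt m ≤ 4 / Real.sqrt (1/(4*ε)) := by
      apply div_le_div_of_nonneg_left (by norm_num) hsε0 hsε
    have hs4 : Real.sqrt (4*ε) = 2 * Real.sqrt ε := by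
      rw [Real.sqrt_mul (by norm_num : (0:ℝ) ≤ 4) ε,
        show (4:ℝ) = 2^2 by norm_num, Real.sqrt_sq (by norm_num : (0:ℝ) ≤ 2)]
    have step2 : 4 / Real.sqrt (1/(4*ε)) = 8 * Real.sqrt ε := by
      rw [one_div, Real.sqrt_inv, div_eq_mul_inv, inv_inv, hs4]
      ring
    have step3 : 8 * Real.sqrt ε ≤ 8 * ε ^ ((1:ℝ)/4) := by
      have hhalf : Real.sqrt ε = ε ^ ((1:ℝ)/2) := Real.sqrt_eq_rpow ε
      have hsplit : ε ^ ((1:ℝ)/2) = ε ^ ((1:ℝ)/4) * ε ^ ((1:ℝ)/4) := by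
        rw [← Real.rpow_add hε0]
        norm_num
      have hle1 : ε ^ ((1:ℝ)/4) ≤ 1 := Real.rpow_le_one hε0.le hε1.le (by norm_num)
      nlinarith [hrpow_nn, hhalf, hsplit, hle1]
    calc 4 / Real.sqrt m ≤ 4 / Real.sqrt (1/(4*ε)) := step1
      _ = 8 * Real.sqrt ε := step2
      _ ≤ 8 * ε ^ ((1:ℝ)/4) := step3
  · -- trivial case : ε > 1/4
    push_neg at hε4
    have htriv : probOffDiff ε (wmajEvent n w s) ≤ 1 := by
      rw [probOffDiff_wmaj_eq]
      rw [div_le_one (by positivity)]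
      calc ∑ x : Cube n, ∑ F : Cube n, pw ε F * offInd w s x (flipF F x)
          ≤ ∑ x : Cube n, ∑ F : Cube n, pw ε F := by
            refine Finset.sum_le_sum fun x _ => Finset.sum_le_sum fun F _ => ?_
            calc pw ε F * offInd w s x (flipF F x) ≤ pw ε F * 1 :=
                  mul_le_mul_of_nonneg_left (offInd_le_one w s x _)
                    (pw_nonneg hε0.le hε1.le F)
              _ = pw ε F := mul_one _
        _ = ∑ _x : Cube n, (1:ℝ) := Finset.sum_congr rfl fun x _ => sum_pw ε
        _ = 2 ^ Fintype.card (Fin n) := two_pow_card_fun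
    refine le_trans htriv ?_
    -- 1 ≤ 8 ε^{1/4}
    have hq : ((1:ℝ)/4) ^ ((1:ℝ)/4) ≤ ε ^ ((1:ℝ)/4) :=
      Real.rpow_le_rpow (by norm_num) hε4.le (by norm_num)
    have ha : (0:ℝ) ≤ ((1:ℝ)/4) ^ ((1:ℝ)/4) := Real.rpow_nonneg (by norm_num) _
    have h4 : (((1:ℝ)/4) ^ ((1:ℝ)/4)) ^ (4:ℕ) = 1/4 := by
      rw [← Real.rpow_natCast (((1:ℝ)/4) ^ ((1:ℝ)/4)) 4, ← Real.rpow_mul (by norm_num)]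
      norm_num
    have h18 : (1:ℝ)/8 ≤ ((1:ℝ)/4) ^ ((1:ℝ)/4) := by
      have hpow : ((1:ℝ)/8) ^ (4:ℕ) ≤ (((1:ℝ)/4) ^ ((1:ℝ)/4)) ^ (4:ℕ) := by
        rw [h4]; norm_num
      exact (pow_le_pow_iff_left₀ (by norm_num) ha (by norm_num)).mp hpow
    linarith [hq, h18]

/-- Weighted majority events are noise stable: P[M \ N_ε M] ≤ C ε^{1/4};
in particular the family of all weighted majority events is uniformly stable. -/
theorem wmaj_stable :
    ∃ C : ℝ,
      (∀ (n : ℕ) (w : Fin n → ℝ) (s : ℝ) (ε : ℝ), 0 < ε → ε < 1 →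
        probOffDiff ε (wmajEvent n w s) ≤ C * ε ^ ((1:ℝ)/4)) ∧
      (∀ η : ℝ, 0 < η → ∃ ε₀ : ℝ, 0 < ε₀ ∧ ∀ ε : ℝ, 0 < ε → ε < ε₀ →
        ∀ (n : ℕ) (w : Fin n → ℝ) (s : ℝ),
          probSymmDiff ε (wmajEvent n w s) < η) := by
  refine ⟨8, fun n w s ε hε0 hε1 => probOffDiff_wmaj_le w s hε0 hε1, ?_⟩
  intro η hη
  refine ⟨min 1 ((η/17)^(4:ℕ)), lt_min one_pos (by positivity), ?_⟩
  intro ε hε0 hεlt n w s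
  have hε1 : ε < 1 := lt_of_lt_of_le hεlt (min_le_left _ _)
  have hεη : ε < (η/17)^(4:ℕ) := lt_of_lt_of_le hεlt (min_le_right _ _)
  rw [probSymmDiff_eq_two_off]
  have hoff := probOffDiff_wmaj_le w s hε0 hε1
  have hrp : ε ^ ((1:ℝ)/4) < η/17 := by
    have h1 : ε ^ ((1:ℝ)/4) < ((η/17)^(4:ℕ)) ^ ((1:ℝ)/4) :=
      Real.rpow_lt_rpow hε0.le hεη (by norm_num)
    have h2 : ((η/17)^(4:ℕ) : ℝ) ^ ((1:ℝ)/4) = η/17 := by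
      rw [← Real.rpow_natCast (η/17) 4, ← Real.rpow_mul (by positivity : (0:ℝ) ≤ η/17)]
      norm_num
    rw [h2] at h1
    exact h1
  calc 2 * probOffDiff ε (wmajEvent n w s) ≤ 2 * (8 * ε ^ ((1:ℝ)/4)) := by linarith
    _ = 16 * ε ^ ((1:ℝ)/4) := by ring
    _ < 16 * (η/17) := by
        have : (0:ℝ) < 16 := by norm_num
        exact (mul_lt_mul_iff_right₀ this).mpr hrp
    _ < η := by linarith

end BKS
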